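/- For ν ≥ k ≥ 1, the number of compositions of ν with k parts in which no part equals 1 and each part i > 1 carries one of i-1 colors equals Σ_{j=0}^{k} (-1)^{k-j} C(k,j) C(ν+j-1, ν-k). -/

import Mathlib

open Finset



lemma Tlem (k : ℕ) : ∀ m r : ℕ,
    ∑ j ∈ range (k+1), (-1:ℤ)^j * (k.choose j) * ((m+j).choose r)
      = (-1)^k * (if k ≤ r then ((m.choose (r-k) : ℕ) : ℤ) else 0) := by
  induction k with
  | zero => intro m r; simp
  | succ k ih =>
    intro m r
    have key : ∑ j ∈ range (k+2), (-1:ℤ)^j * ((k+1).choose j) * ((m+j).choose r)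
        = (∑ j ∈ range (k+1), (-1:ℤ)^j * (k.choose j) * ((m+j).choose r))
          - ∑ j ∈ range (k+1), (-1:ℤ)^j * (k.choose j) * (((m+1)+j).choose r) := by
      rw [Finset.sum_range_succ' (fun j => (-1:ℤ)^j * ((k+1).choose j) * ((m+j).choose r)) (k+1)]
      have step : ∀ i ∈ range (k+1),
          (-1:ℤ)^(i+1) * ((k+1).choose (i+1)) * ((m+(i+1)).choose r)
          = (-1:ℤ)^(i+1) * (k.choose (i+1)) * ((m+(i+1)).choose r)
            + (-((-1:ℤ)^i * (k.choose i) * (((m+1)+i).choose r))) := by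
        intro i _
        rw [Nat.choose_succ_succ]
        push_cast
        have : m + (i+1) = (m+1) + i := by ring
        rw [this]
        ring
      rw [Finset.sum_congr rfl step, Finset.sum_add_distrib, Finset.sum_neg_distrib]
      have h2 : (∑ i ∈ range (k+1), (-1:ℤ)^(i+1) * (k.choose (i+1)) * ((m+(i+1)).choose r))
          + (-1:ℤ)^0 * ((k+1).choose 0) * ((m+0).choose r)
          = ∑ j ∈ range (k+1), (-1:ℤ)^j * (k.choose j) * ((m+j).choose r) := by
        have h3 : (∑ i ∈ range (k+1), (-1:ℤ)^(i+1) * (k.choose (i+1)) * ((m+(i+1)).choose r))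
            + (-1:ℤ)^0 * (k.choose 0) * ((m+0).choose r)
            = ∑ j ∈ range (k+2), (-1:ℤ)^j * (k.choose j) * ((m+j).choose r) :=
          (Finset.sum_range_succ' (fun j => (-1:ℤ)^j * (k.choose j) * ((m+j).choose r)) (k+1)).symm
        have h4 : ∑ j ∈ range (k+2), (-1:ℤ)^j * (k.choose j) * ((m+j).choose r)
            = ∑ j ∈ range (k+1), (-1:ℤ)^j * (k.choose j) * ((m+j).choose r) := by
          rw [Finset.sum_range_succ]; simp [Nat.choose_succ_self]
        rw [h4] at h3
        simpa using h3
      linarith [h2]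
    rw [key, ih m r, ih (m+1) r]
    by_cases h1 : k + 1 ≤ r
    · have hk : k ≤ r := by omega
      have hr : r - k = (r - (k+1)) + 1 := by omega
      simp only [if_pos h1, if_pos hk, hr, Nat.choose_succ_succ]
      push_cast
      ring
    · by_cases h2 : k ≤ r
      · have : r = k := by omega
        subst this
        simp [if_neg h1]
      · simp [if_neg h1, if_neg h2]
        exact fun h => absurd h.le h2




lemma card_tuples (ι : Type*) [Fintype ι] [DecidableEq ι] (n : ℕ) :
    Nat.card {F : ι → ℕ // ∑ i, F i = n} = (Fintype.card ι + n - 1).choose n := by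
  have e1 : {F : ι → ℕ // ∑ i, F i = n} ≃ {f : ι →₀ ℕ // f.sum (fun _ x => x) = n} :=
    (Finsupp.equivFunOnFinite.subtypeEquiv (fun f => by
      rw [Finsupp.sum_fintype _ _ (fun _ => rfl)]
      rfl)).symm
  have e2 : {f : ι →₀ ℕ // f.sum (fun _ x => x) = n} ≃ Sym ι n :=
    (Multiset.toFinsupp.toEquiv.subtypeEquiv (fun μ => by
      rw [show (Multiset.toFinsupp.toEquiv μ).sum (fun _ x => x)
          = μ.toFinsupp.sum (fun _ => id) from rfl, Multiset.toFinsupp_sum_eq])).symm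
  rw [Nat.card_congr (e1.trans e2), Nat.card_eq_fintype_card, Sym.card_sym_eq_choose]



lemma Slem (k m r : ℕ) :
    ∑ j ∈ range (k+1), (-1:ℤ)^(k-j) * (k.choose j) * ((m+j).choose r)
      = if k ≤ r then ((m.choose (r-k) : ℕ) : ℤ) else 0 := by
  have step : ∀ j ∈ range (k+1), (-1:ℤ)^(k-j) * (k.choose j) * ((m+j).choose r)
      = (-1:ℤ)^k * ((-1:ℤ)^j * (k.choose j) * ((m+j).choose r)) := by
    intro j hj
    have hj' : j ≤ k := by
      have := mem_range.mp hj; omega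
    have h2 : (-1:ℤ)^k * (-1:ℤ)^j = (-1:ℤ)^(k-j) * ((-1:ℤ)^j * (-1:ℤ)^j) := by
      rw [← pow_add, ← pow_add, ← pow_add]
      congr 1
      omega
    have h3 : (-1:ℤ)^j * (-1:ℤ)^j = 1 := by
      rw [← pow_add, ← two_mul, pow_mul]; norm_num
    have h4 : (-1:ℤ)^k * (-1:ℤ)^j = (-1:ℤ)^(k-j) := by rw [h2, h3, mul_one]
    rw [← h4]; ring
  rw [Finset.sum_congr rfl step, ← Finset.mul_sum, Tlem, ← mul_assoc]
  have h5 : (-1:ℤ)^k * (-1:ℤ)^k = 1 := by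
    rw [← pow_add, ← two_mul, pow_mul]; norm_num
  rw [h5, one_mul]

lemma card_colored (ν k : ℕ) :
    Nat.card {f : Fin k → ℕ × ℕ //
        (∀ t, 2 ≤ (f t).1) ∧ (∑ t, (f t).1) = ν ∧
        (∀ t, 1 ≤ (f t).2 ∧ (f t).2 ≤ (f t).1 - 1)}
      = if 2*k ≤ ν then (ν - 1).choose (ν - 2*k) else 0 := by
  by_cases hc : 2*k ≤ ν
  · rw [if_pos hc]
    have e1 : {f : Fin k → ℕ × ℕ //
        (∀ t, 2 ≤ (f t).1) ∧ (∑ t, (f t).1) = ν ∧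
        (∀ t, 1 ≤ (f t).2 ∧ (f t).2 ≤ (f t).1 - 1)}
        ≃ {h : Fin k → ℕ × ℕ // ∑ t, ((h t).1 + (h t).2 + 2) = ν} :=
      { toFun := fun f => ⟨fun t => ((f.1 t).2 - 1, (f.1 t).1 - 1 - (f.1 t).2), by
          obtain ⟨h1, h2, h3⟩ := f.2
          refine Eq.trans (Finset.sum_congr rfl fun t _ => ?_) h2
          have a := h1 t; have b := (h3 t).1; have c := (h3 t).2
          simp only
          omega⟩
        invFun := fun h => ⟨fun t => ((h.1 t).1 + (h.1 t).2 + 2, (h.1 t).1 + 1),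
          fun t => by simp, by
            refine Eq.trans (Finset.sum_congr rfl fun t _ => ?_) h.2
            simp,
          fun t => by simp⟩
        left_inv := fun f => by
          obtain ⟨h1, h2, h3⟩ := f.2
          apply Subtype.ext
          funext t
          have a := h1 t; have b := (h3 t).1; have c := (h3 t).2
          have : f.1 t = ((f.1 t).1, (f.1 t).2) := rfl
          rw [this]
          simp only
          refine Prod.ext ?_ ?_ <;> simp <;> omega
        right_inv := fun h => by
          apply Subtype.ext
          funext t
          have : h.1 t = ((h.1 t).1, (h.1 t).2) := rfl
          rw [this]
          simp only
          refine Prod.ext ?_ ?_ <;> simp }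
    have sumeq : ∀ h : Fin k → ℕ × ℕ,
        ∑ t, ((h t).1 + (h t).2 + 2) = (∑ t, ((h t).1 + (h t).2)) + 2*k := by
      intro h
      rw [Finset.sum_add_distrib, Finset.sum_const, card_univ, Fintype.card_fin,
        smul_eq_mul]
      ring
    have e1' : {h : Fin k → ℕ × ℕ // ∑ t, ((h t).1 + (h t).2 + 2) = ν}
        ≃ {h : Fin k → ℕ × ℕ // ∑ t, ((h t).1 + (h t).2) = ν - 2*k} :=
      Equiv.subtypeEquivRight (fun h => by rw [sumeq h]; omega)
    have e2 : {h : Fin k → ℕ × ℕ // ∑ t, ((h t).1 + (h t).2) = ν - 2*k}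
        ≃ {F : Fin k ⊕ Fin k → ℕ // ∑ i, F i = ν - 2*k} :=
      { toFun := fun h => ⟨Sum.elim (fun t => (h.1 t).1) (fun t => (h.1 t).2), by
          rw [Fintype.sum_sum_type, ← Finset.sum_add_distrib]
          exact h.2⟩
        invFun := fun F => ⟨fun t => (F.1 (.inl t), F.1 (.inr t)), by
          rw [Finset.sum_add_distrib, ← Fintype.sum_sum_type]
          exact F.2⟩
        left_inv := fun h => rfl
        right_inv := fun F => Subtype.ext (funext fun i => by cases i <;> rfl) }
    rw [Nat.card_congr ((e1.trans e1').trans e2), card_tuples]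
    congr 1
    · rw [Fintype.card_sum, Fintype.card_fin]
      omega
  · rw [if_neg hc]
    have : IsEmpty {f : Fin k → ℕ × ℕ //
        (∀ t, 2 ≤ (f t).1) ∧ (∑ t, (f t).1) = ν ∧
        (∀ t, 1 ≤ (f t).2 ∧ (f t).2 ≤ (f t).1 - 1)} := by
      constructor
      rintro ⟨f, h1, h2, h3⟩
      apply hc
      rw [← h2]
      calc 2*k = ∑ _t : Fin k, 2 := by
            rw [Finset.sum_const, card_univ, Fintype.card_fin, smul_eq_mul]; ring
        _ ≤ ∑ t, (f t).1 := Finset.sum_le_sum (fun t _ => h1 t)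
    exact Nat.card_of_isEmpty

/-- The number of compositions of `ν` with `k` parts in which no part equals `1` and
each part `i > 1` carries one of `i - 1` colors equals
`Σ_{j=0}^{k} (-1)^{k-j} C(k,j) C(ν+j-1, ν-k)`. -/
theorem card_nMinusOne_color_compositions (ν k : ℕ) (hk : 1 ≤ k) (hν : k ≤ ν) :
    (Nat.card {f : Fin k → ℕ × ℕ //
        (∀ t, 2 ≤ (f t).1) ∧ (∑ t, (f t).1) = ν ∧
        (∀ t, 1 ≤ (f t).2 ∧ (f t).2 ≤ (f t).1 - 1)} : ℤ) =
      ∑ j ∈ Finset.range (k + 1),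
        (-1 : ℤ) ^ (k - j) * Nat.choose k j * Nat.choose (ν + j - 1) (ν - k) := by
  have hrw : ∀ j, ν + j - 1 = (ν - 1) + j := fun j => by omega
  have : ∑ j ∈ Finset.range (k + 1),
        (-1 : ℤ) ^ (k - j) * Nat.choose k j * Nat.choose (ν + j - 1) (ν - k)
      = ∑ j ∈ Finset.range (k + 1),
        (-1 : ℤ) ^ (k - j) * Nat.choose k j * Nat.choose ((ν - 1) + j) (ν - k) := by
    apply Finset.sum_congr rfl
    intro j _
    rw [hrw j]
  rw [this, Slem, card_colored]
  by_cases hc : 2*k ≤ ν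
  · rw [if_pos hc, if_pos (by omega : k ≤ ν - k)]
    congr 2
    omega
  · rw [if_neg hc, if_neg (by omega : ¬ k ≤ ν - k)]
    simp
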